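/- arXiv:1305.5418 — 2 statements merged into one kernel-verified Lean document; each statement's English description precedes it below -/
import Mathlib

section
/- Let α ∈ (0,2), 0 < s < 1 with β := α + 1 - 1/s > 0, and let μ_cusp(0, dz) = 1_{{|z₂| > |z₁|^s}}(z) |z|^{-2-α} dz on ℝ². Then there exists Λ ≥ 1 (depending on α, s) such that for all 0 < ρ ≤ 1: ρ^{-2} ∫_{|z|≤ρ} |z|² μ_cusp(0, dz) + ∫_{ρ<|z|≤1} μ_cusp(0, dz) ≤ Λ ρ^{-β}. -/
open MeasureTheory

/-- The cusp measure on `ℝ²`: restriction of the `α`-stable measure `|z|^{-2-α} dz`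
to the cusp region `{|z₂| > |z₁|^s}`. -/
noncomputable def muCusp (α s : ℝ) : Measure (EuclideanSpace ℝ (Fin 2)) :=
  (volume : Measure (EuclideanSpace ℝ (Fin 2))).withDensity fun z =>
    Set.indicator {z : EuclideanSpace ℝ (Fin 2) | |z 0| ^ s < |z 1|}
      (fun z => ENNReal.ofReal (‖z‖ ^ (-(2 : ℝ) - α))) z

open Set Real ENNReal

private lemma aux_inner (r : ℝ) (hr : 0 ≤ r) :
    ∫⁻ x : ℝ, ({x : ℝ | |x| < r}).indicator (fun _ => (1 : ℝ≥0∞)) x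
      = ENNReal.ofReal (2 * r) := by
  have hset : {x : ℝ | |x| < r} = Set.Ioo (-r) r := by
    ext x; simp [abs_lt]
  rw [hset, lintegral_indicator measurableSet_Ioo, setLIntegral_one, Real.volume_Ioo]
  congr 1; ring

private lemma aux_neg (h : ℝ → ℝ≥0∞) (t : Set ℝ) :
    ∫⁻ y in (fun y : ℝ => -y) ⁻¹' t, h |y| = ∫⁻ y in t, h |y| := by
  have hmp : MeasurePreserving (fun y : ℝ => -y) volume volume :=
    Measure.measurePreserving_neg _
  have hemb : MeasurableEmbedding (fun y : ℝ => -y) :=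
    (Homeomorph.neg ℝ).measurableEmbedding
  have := hmp.setLIntegral_comp_preimage_emb hemb (fun y => h |y|) t
  simpa [abs_neg] using this

private lemma aux_Ioi {p c : ℝ} (hp : p < -1) (hc : 0 < c) :
    ∫⁻ y in Set.Ioi c, ENNReal.ofReal (2 * y ^ p)
      = ENNReal.ofReal (2 * (-c ^ (p + 1) / (p + 1))) := by
  have hint : IntegrableOn (fun y : ℝ => 2 * y ^ p) (Set.Ioi c) :=
    (integrableOn_Ioi_rpow_of_lt hp hc).const_mul 2
  rw [← MeasureTheory.ofReal_integral_eq_lintegral_ofReal hint ?_]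
  · rw [integral_const_mul 2, integral_Ioi_rpow_of_lt hp hc]
  · filter_upwards [ae_restrict_mem measurableSet_Ioi] with y hy
    have hy0 : (0:ℝ) < y := hc.trans hy
    positivity

private lemma aux_Ioc {p c : ℝ} (hp : -1 < p) (hc : 0 ≤ c) :
    ∫⁻ y in Set.Ioc 0 c, ENNReal.ofReal (2 * y ^ p)
      = ENNReal.ofReal (2 * (c ^ (p + 1) / (p + 1))) := by
  have hii : IntervalIntegrable (fun y : ℝ => y ^ p) volume 0 c :=
    intervalIntegral.intervalIntegrable_rpow' hp
  have hint : IntegrableOn (fun y : ℝ => 2 * y ^ p) (Set.Ioc 0 c) :=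
    ((intervalIntegrable_iff_integrableOn_Ioc_of_le hc).mp hii).const_mul 2
  rw [← MeasureTheory.ofReal_integral_eq_lintegral_ofReal hint ?_]
  · rw [integral_const_mul 2, ← intervalIntegral.integral_of_le hc,
      integral_rpow (Or.inl hp), Real.zero_rpow (by linarith : p + 1 ≠ 0)]
    congr 1; ring
  · filter_upwards [ae_restrict_mem measurableSet_Ioc] with y hy
    have hy0 : (0:ℝ) < y := hy.1
    positivity

private lemma outer_sym_Ioi {a : ℝ} (ha : 0 < a) (h : ℝ → ℝ≥0∞) :
    ∫⁻ y in {y : ℝ | a < |y|}, h |y| ≤ 2 * ∫⁻ y in Set.Ioi a, h y := by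
  have hset : {y : ℝ | a < |y|} = Set.Ioi a ∪ Set.Iio (-a) := by
    ext y
    simp only [Set.mem_setOf_eq, lt_abs, Set.mem_union, Set.mem_Ioi, Set.mem_Iio]
    constructor <;> rintro (h1 | h1)
    · exact Or.inl h1
    · exact Or.inr (by linarith)
    · exact Or.inl h1
    · exact Or.inr (by linarith)
  have hneg : ∫⁻ y in Set.Iio (-a), h |y| = ∫⁻ y in Set.Ioi a, h |y| := by
    have hpre : (fun y : ℝ => -y) ⁻¹' Set.Ioi a = Set.Iio (-a) := by
      ext y; simp [lt_neg]
    rw [← hpre, aux_neg]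
  have habs : ∫⁻ y in Set.Ioi a, h |y| = ∫⁻ y in Set.Ioi a, h y :=
    setLIntegral_congr_fun measurableSet_Ioi
      (fun y hy => by rw [abs_of_pos (ha.trans hy)])
  calc ∫⁻ y in {y : ℝ | a < |y|}, h |y|
      ≤ (∫⁻ y in Set.Ioi a, h |y|) + ∫⁻ y in Set.Iio (-a), h |y| := by
        rw [hset]; exact lintegral_union_le _ _ _
    _ = 2 * ∫⁻ y in Set.Ioi a, h y := by rw [hneg, habs, two_mul]

private lemma outer_sym_Ioc {c : ℝ} (hc : 0 ≤ c) (h : ℝ → ℝ≥0∞) :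
    ∫⁻ y in {y : ℝ | |y| ≤ c}, h |y| ≤ 2 * ∫⁻ y in Set.Ioc 0 c, h y := by
  have hset : {y : ℝ | |y| ≤ c} ⊆ Set.Icc 0 c ∪ Set.Ico (-c) 0 := by
    intro y hy; simp only [Set.mem_setOf_eq, abs_le] at hy
    rcases le_or_gt 0 y with h0 | h0
    · exact Or.inl ⟨h0, hy.2⟩
    · exact Or.inr ⟨hy.1, h0⟩
  have hIcc : ∫⁻ y in Set.Icc 0 c, h |y| = ∫⁻ y in Set.Ioc 0 c, h |y| :=
    (setLIntegral_congr Ioc_ae_eq_Icc).symm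
  have hneg : ∫⁻ y in Set.Ico (-c) 0, h |y| = ∫⁻ y in Set.Ioc 0 c, h |y| := by
    have hpre : (fun y : ℝ => -y) ⁻¹' Set.Ioc 0 c = Set.Ico (-c) 0 := by
      ext y
      simp only [Set.mem_preimage, Set.mem_Ioc, Set.mem_Ico, neg_le]
      constructor
      · rintro ⟨h1, h2⟩; exact ⟨h2, by linarith⟩
      · rintro ⟨h1, h2⟩; exact ⟨by linarith, h1⟩
    rw [← hpre, aux_neg]
  have habs : ∫⁻ y in Set.Ioc 0 c, h |y| = ∫⁻ y in Set.Ioc 0 c, h y :=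
    setLIntegral_congr_fun measurableSet_Ioc
      (fun y hy => by rw [abs_of_pos hy.1])
  calc ∫⁻ y in {y : ℝ | |y| ≤ c}, h |y|
      ≤ ∫⁻ y in Set.Icc 0 c ∪ Set.Ico (-c) 0, h |y| :=
        lintegral_mono_set hset
    _ ≤ (∫⁻ y in Set.Icc 0 c, h |y|) + ∫⁻ y in Set.Ico (-c) 0, h |y| :=
        lintegral_union_le _ _ _
    _ = 2 * ∫⁻ y in Set.Ioc 0 c, h y := by rw [hIcc, hneg, habs, two_mul]

private lemma abs_coord_le_norm (z : EuclideanSpace ℝ (Fin 2)) (i : Fin 2) :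
    |z i| ≤ ‖z‖ := by
  rw [EuclideanSpace.norm_eq, Fin.sum_univ_two, ← Real.sqrt_sq_eq_abs]
  simp only [Real.norm_eq_abs, sq_abs]
  apply Real.sqrt_le_sqrt
  fin_cases i <;> simp <;> nlinarith [sq_nonneg (z 0), sq_nonneg (z 1)]

private lemma norm_le_two_abs (z : EuclideanSpace ℝ (Fin 2)) (h : |z 0| ≤ |z 1|) :
    ‖z‖ ≤ 2 * |z 1| := by
  rw [EuclideanSpace.norm_eq, Fin.sum_univ_two]
  simp only [Real.norm_eq_abs, sq_abs]
  have h2 : z 0 ^ 2 + z 1 ^ 2 ≤ (2 * |z 1|) ^ 2 := by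
    nlinarith [sq_abs (z 0), sq_abs (z 1), abs_nonneg (z 0), abs_nonneg (z 1),
      sq_le_sq' (neg_abs_le (z 0)) (le_abs_self (z 0))]
  calc Real.sqrt (z 0 ^ 2 + z 1 ^ 2) ≤ Real.sqrt ((2 * |z 1|) ^ 2) :=
        Real.sqrt_le_sqrt h2
    _ = 2 * |z 1| := Real.sqrt_sq (by positivity)

private lemma mp_phi :
    MeasurePreserving (fun z : EuclideanSpace ℝ (Fin 2) => ((z 1, z 0) : ℝ × ℝ))
      volume volume := by
  have h1 := EuclideanSpace.volume_preserving_symm_measurableEquiv_toLp (Fin 2)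
  have h2 := volume_preserving_finTwoArrow ℝ
  have h3 : MeasurePreserving (Prod.swap : ℝ × ℝ → ℝ × ℝ) volume volume := by
    rw [Measure.volume_eq_prod]
    exact Measure.measurePreserving_swap
  exact h3.comp (h2.comp h1)

private lemma main_bound (s : ℝ) (hs0 : 0 < s) (Y : Set ℝ) (hY : MeasurableSet Y)
    (cf : ℝ → ℝ≥0∞) (hcf : Measurable cf) :
    ∫⁻ z : EuclideanSpace ℝ (Fin 2),
        (Y.indicator cf (z 1)) *
          (({p : ℝ × ℝ | |p.2| < |p.1| ^ (1 / s)}).indicator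
            (fun _ => (1 : ℝ≥0∞)) (z 1, z 0))
      = ∫⁻ y in Y, cf y * ENNReal.ofReal (2 * |y| ^ (1 / s)) := by
  set S : Set (ℝ × ℝ) := {p : ℝ × ℝ | |p.2| < |p.1| ^ (1 / s)} with hSdef
  have hS : MeasurableSet S :=
    measurableSet_lt (measurable_snd.abs) ((measurable_fst.abs).pow_const _)
  set G : ℝ × ℝ → ℝ≥0∞ :=
    fun p => Y.indicator cf p.1 * S.indicator (fun _ => (1 : ℝ≥0∞)) p with hGdef
  have hG : Measurable G :=
    ((hcf.indicator hY).comp measurable_fst).mul (measurable_const.indicator hS)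
  have step1 : ∫⁻ z : EuclideanSpace ℝ (Fin 2),
      (Y.indicator cf (z 1)) * (S.indicator (fun _ => (1 : ℝ≥0∞)) (z 1, z 0))
        = ∫⁻ p : ℝ × ℝ, G p := mp_phi.lintegral_comp hG
  rw [step1, Measure.volume_eq_prod, lintegral_prod _ hG.aemeasurable]
  have inner_eq : ∀ x : ℝ,
      ∫⁻ y : ℝ, G (x, y) = Y.indicator cf x * ENNReal.ofReal (2 * |x| ^ (1 / s)) := by
    intro x
    have hrw : ∀ y : ℝ, G (x, y) =
        Y.indicator cf x * ({t : ℝ | |t| < |x| ^ (1 / s)}).indicator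
          (fun _ => (1 : ℝ≥0∞)) y := by
      intro y
      simp only [hGdef, hSdef, Set.indicator_apply, Set.mem_setOf_eq]
    simp only [hrw]
    rw [lintegral_const_mul _ (measurable_const.indicator
      (measurableSet_lt measurable_abs measurable_const)),
      aux_inner _ (Real.rpow_nonneg (abs_nonneg x) _)]
  calc ∫⁻ x : ℝ, ∫⁻ y : ℝ, G (x, y)
      = ∫⁻ x : ℝ, Y.indicator cf x * ENNReal.ofReal (2 * |x| ^ (1 / s)) :=
        lintegral_congr inner_eq
    _ = ∫⁻ x : ℝ, Y.indicator (fun x => cf x * ENNReal.ofReal (2 * |x| ^ (1 / s))) x := by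
        apply lintegral_congr; intro x
        by_cases hx : x ∈ Y <;> simp [hx]
    _ = ∫⁻ y in Y, cf y * ENNReal.ofReal (2 * |y| ^ (1 / s)) := by
        rw [lintegral_indicator hY]

theorem muCusp_K1 (α s : ℝ) (hα : 0 < α) (hα2 : α < 2) (hs0 : 0 < s) (hs1 : s < 1)
    (hβ : 0 < α + 1 - 1 / s) :
    ∃ Λ : ℝ, 1 ≤ Λ ∧ ∀ ρ : ℝ, 0 < ρ → ρ ≤ 1 →
      ENNReal.ofReal (ρ ^ (-2 : ℝ)) *
          ∫⁻ z in {z : EuclideanSpace ℝ (Fin 2) | ‖z‖ ≤ ρ},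
            ENNReal.ofReal (‖z‖ ^ 2) ∂(muCusp α s)
        + muCusp α s {z : EuclideanSpace ℝ (Fin 2) | ρ < ‖z‖ ∧ ‖z‖ ≤ 1}
        ≤ ENNReal.ofReal (Λ * ρ ^ (-(α + 1 - 1 / s))) := by
  have hsinv : 1 < 1 / s := one_lt_one_div hs0 hs1
  set β : ℝ := α + 1 - 1 / s with hβdef
  have hβ2 : β < 2 := by simp only [hβdef]; linarith
  -- the cusp set and the density
  set cusp : Set (EuclideanSpace ℝ (Fin 2)) :=
    {z : EuclideanSpace ℝ (Fin 2) | |z 0| ^ s < |z 1|} with hcuspdef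
  set D : EuclideanSpace ℝ (Fin 2) → ℝ≥0∞ :=
    fun z => Set.indicator cusp
      (fun z => ENNReal.ofReal (‖z‖ ^ (-(2 : ℝ) - α))) z with hDdef
  have hm0 : Measurable fun z : EuclideanSpace ℝ (Fin 2) => z 0 := (measurable_pi_apply 0).comp (WithLp.measurable_ofLp 2 (Fin 2 → ℝ))
  have hm1 : Measurable fun z : EuclideanSpace ℝ (Fin 2) => z 1 := (measurable_pi_apply 1).comp (WithLp.measurable_ofLp 2 (Fin 2 → ℝ))
  have hcuspmeas : MeasurableSet cusp :=
    measurableSet_lt (hm0.abs.pow_const _) hm1.abs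
  have hD : Measurable D :=
    ((measurable_norm.pow_const _).ennreal_ofReal).indicator hcuspmeas
  refine ⟨4 / (2 - β) + 16 / β, ?_, ?_⟩
  · have h1 : (8:ℝ) ≤ 16 / β := by
      rw [le_div_iff₀ hβ]; nlinarith
    have h2 : (0:ℝ) < 4 / (2 - β) := by
      have : (0:ℝ) < 2 - β := by linarith
      positivity
    linarith
  intro ρ hρ hρ1
  have hSA : MeasurableSet {z : EuclideanSpace ℝ (Fin 2) | ‖z‖ ≤ ρ} :=
    measurableSet_le measurable_norm measurable_const
  have hTB : MeasurableSet {z : EuclideanSpace ℝ (Fin 2) | ρ < ‖z‖ ∧ ‖z‖ ≤ 1} := by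
    have : {z : EuclideanSpace ℝ (Fin 2) | ρ < ‖z‖ ∧ ‖z‖ ≤ 1}
        = {z : EuclideanSpace ℝ (Fin 2) | ρ < ‖z‖} ∩ {z | ‖z‖ ≤ 1} := rfl
    rw [this]
    exact (measurableSet_lt measurable_const measurable_norm).inter
      (measurableSet_le measurable_norm measurable_const)
  set Sp : Set (ℝ × ℝ) := {p : ℝ × ℝ | |p.2| < |p.1| ^ (1 / s)} with hSpdef
  have hmemSp : ∀ z : EuclideanSpace ℝ (Fin 2), z ∈ cusp → (z 1, z 0) ∈ Sp := by
    intro z hz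
    simp only [hcuspdef, Set.mem_setOf_eq] at hz
    simp only [hSpdef, Set.mem_setOf_eq]
    have hlt : (|z 0| ^ s) ^ (1 / s) < |z 1| ^ (1 / s) :=
      Real.rpow_lt_rpow (Real.rpow_nonneg (abs_nonneg _) _) hz (by positivity)
    calc |z 0| = (|z 0| ^ s) ^ (1 / s) := by
          rw [← Real.rpow_mul (abs_nonneg _), mul_one_div_cancel hs0.ne', Real.rpow_one]
      _ < |z 1| ^ (1 / s) := hlt
  have hmu : muCusp α s = volume.withDensity D := rfl
  -- Part A : the small-ball integral
  have hA : ∫⁻ z in {z : EuclideanSpace ℝ (Fin 2) | ‖z‖ ≤ ρ},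
      ENNReal.ofReal (‖z‖ ^ 2) ∂(muCusp α s)
      ≤ ENNReal.ofReal ((4 / (2 - β)) * ρ ^ ((2:ℝ) - β)) := by
    have hg2 : Measurable fun z : EuclideanSpace ℝ (Fin 2) => ENNReal.ofReal (‖z‖ ^ 2) :=
      (measurable_norm.pow_const 2).ennreal_ofReal
    have h1 : ∫⁻ z in {z : EuclideanSpace ℝ (Fin 2) | ‖z‖ ≤ ρ},
        ENNReal.ofReal (‖z‖ ^ 2) ∂(muCusp α s)
        = ∫⁻ z in {z : EuclideanSpace ℝ (Fin 2) | ‖z‖ ≤ ρ},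
            (D z) * ENNReal.ofReal (‖z‖ ^ 2) ∂volume := by
      rw [hmu, restrict_withDensity hSA, lintegral_withDensity_eq_lintegral_mul _ hD hg2]
      rfl
    set YA : Set ℝ := {y : ℝ | |y| ≤ ρ} with hYAdef
    have hYA : MeasurableSet YA := measurableSet_le measurable_abs measurable_const
    set cfA : ℝ → ℝ≥0∞ := fun y => ENNReal.ofReal (|y| ^ (-α)) with hcfAdef
    have hcfA : Measurable cfA := (measurable_abs.pow_const _).ennreal_ofReal
    have h2 : ∀ z ∈ {z : EuclideanSpace ℝ (Fin 2) | ‖z‖ ≤ ρ},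
        D z * ENNReal.ofReal (‖z‖ ^ 2)
          ≤ (YA.indicator cfA (z 1)) * (Sp.indicator (fun _ => (1:ℝ≥0∞)) (z 1, z 0)) := by
      intro z hz
      simp only [Set.mem_setOf_eq] at hz
      by_cases hc : z ∈ cusp
      · have hcusp' := hc
        simp only [hcuspdef, Set.mem_setOf_eq] at hcusp'
        have hz1pos : 0 < |z 1| :=
          lt_of_le_of_lt (Real.rpow_nonneg (abs_nonneg _) s) hcusp'
        have hz1n : |z 1| ≤ ‖z‖ := abs_coord_le_norm z 1
        have hnpos : 0 < ‖z‖ := lt_of_lt_of_le hz1pos hz1n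
        have hy : z 1 ∈ YA := le_trans hz1n hz
        simp only [hDdef]
        rw [Set.indicator_of_mem hc, Set.indicator_of_mem hy,
          Set.indicator_of_mem (hmemSp z hc), mul_one]
        rw [hcfAdef, ← ENNReal.ofReal_mul (Real.rpow_nonneg (norm_nonneg z) _)]
        apply ENNReal.ofReal_le_ofReal
        have hprod : ‖z‖ ^ (-(2:ℝ) - α) * ‖z‖ ^ 2 = ‖z‖ ^ (-α) := by
          rw [← Real.rpow_natCast ‖z‖ 2, ← Real.rpow_add hnpos]
          congr 1
          push_cast
          ring
        rw [hprod]
        exact Real.rpow_le_rpow_of_nonpos hz1pos hz1n (by linarith)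
      · simp only [hDdef]
        simp [Set.indicator_of_notMem hc]
    calc ∫⁻ z in {z : EuclideanSpace ℝ (Fin 2) | ‖z‖ ≤ ρ},
          ENNReal.ofReal (‖z‖ ^ 2) ∂(muCusp α s)
        = ∫⁻ z in {z : EuclideanSpace ℝ (Fin 2) | ‖z‖ ≤ ρ},
            D z * ENNReal.ofReal (‖z‖ ^ 2) ∂volume := h1
      _ ≤ ∫⁻ z in {z : EuclideanSpace ℝ (Fin 2) | ‖z‖ ≤ ρ},
            (YA.indicator cfA (z 1)) *
              (Sp.indicator (fun _ => (1:ℝ≥0∞)) (z 1, z 0)) ∂volume :=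
          setLIntegral_mono' hSA h2
      _ ≤ ∫⁻ z : EuclideanSpace ℝ (Fin 2),
            (YA.indicator cfA (z 1)) *
              (Sp.indicator (fun _ => (1:ℝ≥0∞)) (z 1, z 0)) :=
          setLIntegral_le_lintegral _ _
      _ = ∫⁻ y in YA, cfA y * ENNReal.ofReal (2 * |y| ^ (1 / s)) :=
          main_bound s hs0 YA hYA cfA hcfA
      _ ≤ ∫⁻ y in YA, ENNReal.ofReal (2 * |y| ^ ((1:ℝ) - β)) := by
          apply setLIntegral_mono' hYA
          intro y _
          rw [hcfAdef, ← ENNReal.ofReal_mul (Real.rpow_nonneg (abs_nonneg _) _)]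
          apply ENNReal.ofReal_le_ofReal
          by_cases hy0 : y = 0
          · subst hy0
            simp only [abs_zero, Real.zero_rpow (show -α ≠ 0 by linarith), zero_mul]
            positivity
          · have habs : 0 < |y| := abs_pos.mpr hy0
            rw [show |y| ^ (-α) * (2 * |y| ^ (1 / s))
                = 2 * (|y| ^ (-α) * |y| ^ (1 / s)) by ring,
              ← Real.rpow_add habs]
            apply le_of_eq; congr 1
            rw [hβdef]; ring
      _ ≤ 2 * ∫⁻ y in Set.Ioc 0 ρ, ENNReal.ofReal (2 * y ^ ((1:ℝ) - β)) :=
          outer_sym_Ioc hρ.le (fun t => ENNReal.ofReal (2 * t ^ ((1:ℝ) - β)))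
      _ = ENNReal.ofReal (4 / (2 - β) * ρ ^ ((2:ℝ) - β)) := by
          rw [aux_Ioc (by linarith : (-1:ℝ) < 1 - β) hρ.le,
            show ((2:ℝ≥0∞)) = ENNReal.ofReal 2 from (ENNReal.ofReal_ofNat 2).symm,
            ← ENNReal.ofReal_mul (by norm_num : (0:ℝ) ≤ 2)]
          congr 1
          rw [show (1:ℝ) - β + 1 = 2 - β by ring]
          have h2β : (2:ℝ) - β ≠ 0 := ne_of_gt (by linarith : (0:ℝ) < 2 - β)
          field_simp
          ring
  -- Part B : the annulus mass
  have hB : muCusp α s {z : EuclideanSpace ℝ (Fin 2) | ρ < ‖z‖ ∧ ‖z‖ ≤ 1}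
      ≤ ENNReal.ofReal ((16 / β) * ρ ^ (-β)) := by
    have h1 : muCusp α s {z : EuclideanSpace ℝ (Fin 2) | ρ < ‖z‖ ∧ ‖z‖ ≤ 1}
        = ∫⁻ z in {z : EuclideanSpace ℝ (Fin 2) | ρ < ‖z‖ ∧ ‖z‖ ≤ 1}, D z ∂volume := by
      rw [hmu, withDensity_apply _ hTB]
    set YB : Set ℝ := {y : ℝ | ρ / 2 < |y|} with hYBdef
    have hYB : MeasurableSet YB := measurableSet_lt measurable_const measurable_abs
    set cfB : ℝ → ℝ≥0∞ := fun y => ENNReal.ofReal (|y| ^ (-(2:ℝ) - α)) with hcfBdef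
    have hcfB : Measurable cfB := (measurable_abs.pow_const _).ennreal_ofReal
    have h2 : ∀ z ∈ {z : EuclideanSpace ℝ (Fin 2) | ρ < ‖z‖ ∧ ‖z‖ ≤ 1},
        D z ≤ (YB.indicator cfB (z 1)) *
          (Sp.indicator (fun _ => (1:ℝ≥0∞)) (z 1, z 0)) := by
      intro z hz
      obtain ⟨hzρ, hz1'⟩ := hz
      by_cases hc : z ∈ cusp
      · have hcusp' := hc
        simp only [hcuspdef, Set.mem_setOf_eq] at hcusp'
        have hz1pos : 0 < |z 1| :=
          lt_of_le_of_lt (Real.rpow_nonneg (abs_nonneg _) s) hcusp'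
        have habs01 : |z 0| ≤ |z 1| := by
          rcases (abs_nonneg (z 0)).eq_or_lt with h0 | h0
          · rw [← h0]; exact hz1pos.le
          · have hle1 : |z 0| ≤ 1 := le_trans (abs_coord_le_norm z 0) hz1'
            have hh : |z 0| ^ (1:ℝ) ≤ |z 0| ^ s :=
              Real.rpow_le_rpow_of_exponent_ge h0 hle1 hs1.le
            rw [Real.rpow_one] at hh
            exact le_trans hh hcusp'.le
        have hρ2 : z 1 ∈ YB := by
          simp only [hYBdef, Set.mem_setOf_eq]
          have := norm_le_two_abs z habs01
          linarith
        simp only [hDdef]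
        rw [Set.indicator_of_mem hc, Set.indicator_of_mem hρ2,
          Set.indicator_of_mem (hmemSp z hc), mul_one, hcfBdef]
        apply ENNReal.ofReal_le_ofReal
        exact Real.rpow_le_rpow_of_nonpos hz1pos (abs_coord_le_norm z 1) (by linarith)
      · simp only [hDdef]; simp [Set.indicator_of_notMem hc]
    calc muCusp α s {z : EuclideanSpace ℝ (Fin 2) | ρ < ‖z‖ ∧ ‖z‖ ≤ 1}
        = ∫⁻ z in {z : EuclideanSpace ℝ (Fin 2) | ρ < ‖z‖ ∧ ‖z‖ ≤ 1}, D z ∂volume := h1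
      _ ≤ ∫⁻ z in {z : EuclideanSpace ℝ (Fin 2) | ρ < ‖z‖ ∧ ‖z‖ ≤ 1},
            (YB.indicator cfB (z 1)) *
              (Sp.indicator (fun _ => (1:ℝ≥0∞)) (z 1, z 0)) ∂volume :=
          setLIntegral_mono' hTB h2
      _ ≤ ∫⁻ z : EuclideanSpace ℝ (Fin 2),
            (YB.indicator cfB (z 1)) *
              (Sp.indicator (fun _ => (1:ℝ≥0∞)) (z 1, z 0)) :=
          setLIntegral_le_lintegral _ _
      _ = ∫⁻ y in YB, cfB y * ENNReal.ofReal (2 * |y| ^ (1 / s)) :=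
          main_bound s hs0 YB hYB cfB hcfB
      _ ≤ ∫⁻ y in YB, ENNReal.ofReal (2 * |y| ^ (-(1:ℝ) - β)) := by
          apply setLIntegral_mono' hYB
          intro y hy
          simp only [hYBdef, Set.mem_setOf_eq] at hy
          have habs : 0 < |y| := lt_of_le_of_lt (by positivity) hy
          rw [hcfBdef, ← ENNReal.ofReal_mul (Real.rpow_nonneg (abs_nonneg _) _)]
          apply ENNReal.ofReal_le_ofReal
          rw [show |y| ^ (-(2:ℝ) - α) * (2 * |y| ^ (1 / s))
              = 2 * (|y| ^ (-(2:ℝ) - α) * |y| ^ (1 / s)) by ring,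
            ← Real.rpow_add habs]
          apply le_of_eq; congr 1
          rw [hβdef]; ring
      _ ≤ 2 * ∫⁻ y in Set.Ioi (ρ / 2), ENNReal.ofReal (2 * y ^ (-(1:ℝ) - β)) :=
          outer_sym_Ioi (by linarith) (fun t => ENNReal.ofReal (2 * t ^ (-(1:ℝ) - β)))
      _ ≤ ENNReal.ofReal ((16 / β) * ρ ^ (-β)) := by
          rw [aux_Ioi (by linarith : -(1:ℝ) - β < -1) (by linarith : (0:ℝ) < ρ / 2),
            show ((2:ℝ≥0∞)) = ENNReal.ofReal 2 from (ENNReal.ofReal_ofNat 2).symm,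
            ← ENNReal.ofReal_mul (by norm_num : (0:ℝ) ≤ 2)]
          apply ENNReal.ofReal_le_ofReal
          rw [show -(1:ℝ) - β + 1 = -β by ring, neg_div_neg_eq]
          have hhalf : (ρ / 2 : ℝ) ^ (-β) = ρ ^ (-β) * 2 ^ β := by
            rw [Real.div_rpow hρ.le (by norm_num),
              Real.rpow_neg (by norm_num : (0:ℝ) ≤ 2), div_eq_mul_inv, inv_inv]
          have h4 : (2:ℝ) ^ (2:ℝ) = 4 := by
            norm_num
          have h2β4 : (2:ℝ) ^ β ≤ 4 := by
            have h := Real.rpow_le_rpow_of_exponent_le (by norm_num : (1:ℝ) ≤ 2) hβ2.le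
            rwa [h4] at h
          have hρβ : 0 < ρ ^ (-β) := Real.rpow_pos_of_pos hρ _
          rw [hhalf,
            show 2 * (2 * (ρ ^ (-β) * 2 ^ β / β)) = 4 * (ρ ^ (-β) * 2 ^ β) / β by ring,
            show 16 / β * ρ ^ (-β) = 4 * (ρ ^ (-β) * 4) / β by ring]
          gcongr
  calc ENNReal.ofReal (ρ ^ (-2 : ℝ)) *
          (∫⁻ z in {z : EuclideanSpace ℝ (Fin 2) | ‖z‖ ≤ ρ},
            ENNReal.ofReal (‖z‖ ^ 2) ∂(muCusp α s))
        + muCusp α s {z : EuclideanSpace ℝ (Fin 2) | ρ < ‖z‖ ∧ ‖z‖ ≤ 1}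
      ≤ ENNReal.ofReal (ρ ^ (-2 : ℝ)) *
          ENNReal.ofReal ((4 / (2 - β)) * ρ ^ ((2:ℝ) - β))
        + ENNReal.ofReal ((16 / β) * ρ ^ (-β)) :=
        add_le_add (mul_le_mul_right hA _) hB
    _ = ENNReal.ofReal ((4 / (2 - β) + 16 / β) * ρ ^ (-β)) := by
        have h2β : (0:ℝ) < 2 - β := by linarith
        rw [← ENNReal.ofReal_mul (by positivity),
          ← ENNReal.ofReal_add (by positivity) (by positivity)]
        congr 1
        have hmul : ρ ^ (-2 : ℝ) * ρ ^ ((2:ℝ) - β) = ρ ^ (-β) := by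
          rw [← Real.rpow_add hρ]; congr 1; ring
        calc ρ ^ (-2 : ℝ) * (4 / (2 - β) * ρ ^ ((2:ℝ) - β)) + 16 / β * ρ ^ (-β)
            = 4 / (2 - β) * (ρ ^ (-2 : ℝ) * ρ ^ ((2:ℝ) - β)) + 16 / β * ρ ^ (-β) := by
              ring
          _ = (4 / (2 - β) + 16 / β) * ρ ^ (-β) := by rw [hmul]; ring
end

section
/- For all positive real numbers a, b and s, t > 0: (b - a)(s²/a - t²/b) ≥ st(log(b/t) - log(a/s))² - 3(t - s)². -/
lemma aux_log (y : ℝ) (hy : 1 ≤ y) : 2 * Real.log y ≤ y - 1/y := by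
  rcases eq_or_lt_of_le hy with h | h
  · simp [← h]
  · have hy0 : 0 < y := by linarith
    have hu : 0 < Real.log y := Real.log_pos h
    have h2 : Real.log y ≤ Real.sinh (Real.log y) :=
      Real.self_le_sinh_iff.mpr hu.le
    rw [Real.sinh_eq, Real.exp_log hy0, Real.exp_neg, Real.exp_log hy0] at h2
    have h3 : (1:ℝ)/y = y⁻¹ := one_div y
    linarith [h2, h3.ge, h3.le]

lemma aux_sq (p q : ℝ) (hp : 0 < p) (hq : 0 < q) (hpq : q ≤ p) :
    p * q * Real.log (p / q) ^ 2 ≤ (p - q) ^ 2 := by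
  set y : ℝ := Real.sqrt (p / q) with hy
  have hy1 : 1 ≤ y := Real.one_le_sqrt.mpr ((one_le_div hq).mpr hpq)
  have hy0 : 0 < y := by linarith
  have hysq : y ^ 2 = p / q := Real.sq_sqrt (by positivity)
  have hlog : Real.log (p / q) = 2 * Real.log y := by
    rw [← hysq, Real.log_pow]; push_cast; ring
  have h1 := aux_log y hy1
  have hL : 0 ≤ Real.log y := Real.log_nonneg hy1
  -- p*q*(2 log y)^2 ≤ p*q*(y - 1/y)^2 = (p-q)^2
  have hval : p * q * (y - 1/y) ^ 2 = (p - q) ^ 2 := by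
    have hpq' : p = y ^ 2 * q := by rw [hysq]; field_simp
    rw [hpq']
    field_simp
  rw [hlog]
  calc p * q * (2 * Real.log y) ^ 2 ≤ p * q * (y - 1/y) ^ 2 := by
        apply mul_le_mul_of_nonneg_left _ (by positivity)
        have h2 : 0 ≤ 2 * Real.log y := by linarith
        exact pow_le_pow_left₀ h2 h1 2
    _ = (p - q) ^ 2 := hval

lemma aux_sq' (p q : ℝ) (hp : 0 < p) (hq : 0 < q) :
    p * q * Real.log (p / q) ^ 2 ≤ (p - q) ^ 2 := by
  rcases le_total q p with h | h
  · exact aux_sq p q hp hq h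
  · have := aux_sq q p hq hp h
    have hlog : Real.log (p / q) = - Real.log (q / p) := by
      rw [Real.log_div hp.ne' hq.ne', Real.log_div hq.ne' hp.ne']; ring
    rw [hlog]
    nlinarith [this]

theorem log_pointwise_ineq (a b s t : ℝ) (ha : 0 < a) (hb : 0 < b) (hs : 0 < s) (ht : 0 < t) :
    (b - a) * (s ^ 2 / a - t ^ 2 / b) ≥
      s * t * (Real.log (b / t) - Real.log (a / s)) ^ 2 - 3 * (t - s) ^ 2 := by
  set σ : ℝ := Real.sqrt (b / a) with hσ
  have hσ0 : 0 < σ := Real.sqrt_pos.mpr (by positivity)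
  have hσsq : σ ^ 2 = b / a := Real.sq_sqrt (by positivity)
  set p : ℝ := s * σ with hp
  set q : ℝ := t / σ with hq
  have hp0 : 0 < p := by positivity
  have hq0 : 0 < q := by positivity
  have hpq : p * q = s * t := by
    rw [hp, hq, mul_div_assoc', div_eq_iff hσ0.ne']; ring
  have hpdivq : p / q = s * b / (t * a) := by
    have hσ2 : σ ^ 2 * a = b := by
      rw [hσsq]; field_simp
    rw [hp, hq]; field_simp; linear_combination hσ2
  have hlog : Real.log (b / t) - Real.log (a / s) = Real.log (p / q) := by
    rw [hpdivq, Real.log_div hb.ne' ht.ne', Real.log_div ha.ne' hs.ne',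
      Real.log_div (by positivity) (by positivity),
      Real.log_mul hs.ne' hb.ne', Real.log_mul ht.ne' ha.ne']
    ring
  have hp2 : p ^ 2 = s ^ 2 * b / a := by rw [hp, mul_pow, hσsq]; ring
  have hq2 : q ^ 2 = t ^ 2 * a / b := by
    rw [hq, div_pow, hσsq]
    field_simp
  have key := aux_sq' p q hp0 hq0
  have hLHS : (b - a) * (s ^ 2 / a - t ^ 2 / b) = p ^ 2 + q ^ 2 - s ^ 2 - t ^ 2 := by
    rw [hp2, hq2]; field_simp; ring
  rw [hLHS, hlog, ← hpq]
  nlinarith [key, hpq]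
end
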